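/- For any bounded measurable set F ⊆ ℝ^p and any 0 < α ≤ 1, D_*(α, F) ≤ max(0, \overline{dim}_B(F) − 1), where \overline{dim}_B denotes the upper box dimension. -/

import Mathlib

open MeasureTheory

noncomputable section

/-- `C₁^α(F)`: the set of 1-Hölder-α functions `F → ℝ`, as a subset of the bounded
continuous functions on `F` (which carry the supremum metric). -/
def HolderBall (α : ℝ) {p : ℕ} (F : Set (EuclideanSpace ℝ (Fin p))) :
    Set (BoundedContinuousFunction ↥F ℝ) :=
  {f | ∀ x y : ↥F,
    |f x - f y| ≤ dist (x : EuclideanSpace ℝ (Fin p)) (y : EuclideanSpace ℝ (Fin p)) ^ α}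

/-- `D_*^f(F) = sup {d : λ{r : dim_H (f⁻¹(r)) ≥ d} > 0}`. -/
def DstarF {p : ℕ} (F : Set (EuclideanSpace ℝ (Fin p))) (f : ↥F → ℝ) : ℝ :=
  sSup {d : ℝ | 0 < volume {r : ℝ | ENNReal.ofReal d ≤ dimH (Subtype.val '' (f ⁻¹' {r}))}}

/-- `D_*(α, F)`: the supremum over all dense Gδ subsets `G` of `C₁^α(F)` of
`inf {D_*^f(F) : f ∈ G}`. -/
def DStar {p : ℕ} (α : ℝ) (F : Set (EuclideanSpace ℝ (Fin p))) : ℝ :=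
  sSup {d : ℝ | ∃ G : Set ↥(HolderBall α F), Dense G ∧ IsGδ G ∧
    d = sInf ((fun g : ↥(HolderBall α F) =>
      DstarF F ⇑(g : BoundedContinuousFunction ↥F ℝ)) '' G)}

/-- The smallest number of sets of diameter at most `δ` needed to cover `E`. -/
def Ncov {p : ℕ} (E : Set (EuclideanSpace ℝ (Fin p))) (δ : ℝ) : ℕ :=
  sInf {m : ℕ | ∃ U : Fin m → Set (EuclideanSpace ℝ (Fin p)),
    (∀ i, EMetric.diam (U i) ≤ ENNReal.ofReal δ) ∧ E ⊆ ⋃ i, U i}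

/-- The upper box dimension `limsup_{δ → 0⁺} log N_δ(E) / log (1/δ)`. -/
def upperBoxDim {p : ℕ} (E : Set (EuclideanSpace ℝ (Fin p))) : ℝ :=
  Filter.limsup (fun δ : ℝ => Real.log (Ncov E δ) / Real.log (1 / δ))
    (nhdsWithin 0 (Set.Ioi 0))

namespace Stmt17aux

open Set Filter
open scoped NNReal


variable {p : ℕ}

/-- grid covering of a ball -/
lemma grid_cover {R δ : ℝ} (hR : 0 ≤ R) (hδ : 0 < δ) :
    ∃ m : ℕ, (m : ℝ) ≤ 2*R*((p:ℝ)+1)/δ + 2 ∧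
      ∃ U : Fin (m^p) → Set (EuclideanSpace ℝ (Fin p)),
        (∀ i, EMetric.diam (U i) ≤ ENNReal.ofReal δ) ∧
        Metric.closedBall (0:EuclideanSpace ℝ (Fin p)) R ⊆ ⋃ i, U i := by
  set a : ℝ := δ / ((p:ℝ)+1) with ha_def
  have hp1 : (0:ℝ) < (p:ℝ) + 1 := by positivity
  have ha : 0 < a := by positivity
  set m : ℕ := ⌊2*R/a⌋₊ + 1 with hm_def
  have hm0 : 0 < m := Nat.succ_pos _
  have h2 : 2*R/a = 2*R*((p:ℝ)+1)/δ := by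
    rw [ha_def]; field_simp
  refine ⟨m, ?_, ?_⟩
  · have h1 : (⌊2*R/a⌋₊ : ℝ) ≤ 2*R/a := Nat.floor_le (by positivity)
    push_cast
    rw [← h2]
    linarith [show (m:ℝ) = ⌊2*R/a⌋₊ + 1 by rw [hm_def, Nat.cast_add, Nat.cast_one]]
  · set V : (Fin p → Fin m) → Set (EuclideanSpace ℝ (Fin p)) :=
      fun k => {x | ∀ i, x i ∈ Icc (-R + a * (k i : ℝ)) (-R + a * (k i : ℝ) + a)} with hV
    have hcard : Fintype.card (Fin p → Fin m) = m ^ p := by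
      simp [Fintype.card_fun]
    let e : (Fin p → Fin m) ≃ Fin (m^p) := Fintype.equivFinOfCardEq hcard
    refine ⟨fun j => V (e.symm j), ?_, ?_⟩
    · intro j
      apply EMetric.diam_le
      intro x hx y hy
      rw [edist_dist]
      apply ENNReal.ofReal_le_ofReal
      have hco : ∀ i, dist (x i) (y i) ≤ a := by
        intro i
        have := Real.dist_le_of_mem_Icc (hx i) (hy i)
        linarith [this]
      have hsum : (∑ i, dist (x i) (y i) ^ 2) ≤ (p:ℝ) * a^2 := by
        calc (∑ i, dist (x i) (y i) ^ 2) ≤ ∑ _i : Fin p, a^2 := by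
              apply Finset.sum_le_sum
              intro i _
              have h0 := dist_nonneg (x := x i) (y := y i)
              nlinarith [hco i]
          _ = (p:ℝ) * a^2 := by simp [Finset.sum_const, nsmul_eq_mul]
      have hkey : (p:ℝ) * a^2 ≤ δ^2 := by
        have ha2 : a^2 = δ^2/((p:ℝ)+1)^2 := by rw [ha_def, div_pow]
        rw [ha2, ← mul_div_assoc, div_le_iff₀ (by positivity)]
        nlinarith [mul_nonneg (sq_nonneg δ) (sq_nonneg ((p:ℝ))), mul_nonneg (sq_nonneg δ) (Nat.cast_nonneg (α := ℝ) p), sq_nonneg δ]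
      rw [EuclideanSpace.dist_eq]
      calc Real.sqrt (∑ i, dist (x i) (y i) ^ 2) ≤ Real.sqrt (δ^2) :=
            Real.sqrt_le_sqrt (by linarith)
        _ = δ := Real.sqrt_sq hδ.le
    · intro x hx
      have hxnorm : ‖x‖ ≤ R := by rwa [Metric.mem_closedBall, dist_zero_right] at hx
      have hcoord : ∀ i, |x i| ≤ R := by
        intro i
        refine le_trans ?_ hxnorm
        rw [EuclideanSpace.norm_eq]
        have h1 : |x i| = Real.sqrt (‖x i‖^2) := by
          rw [Real.norm_eq_abs, Real.sqrt_sq_eq_abs, abs_abs]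
        rw [h1]
        apply Real.sqrt_le_sqrt
        exact Finset.single_le_sum (f := fun i => ‖x i‖^2) (fun i _ => by positivity)
          (Finset.mem_univ i)
      have hnn : ∀ i, 0 ≤ (x i + R) := fun i => by
        have := (abs_le.mp (hcoord i)).1; linarith
      set k : Fin p → Fin m := fun i =>
        ⟨min ⌊(x i + R)/a⌋₊ (m-1), lt_of_le_of_lt (min_le_right _ _) (Nat.sub_lt hm0 one_pos)⟩
        with hk
      have hxV : x ∈ V k := by
        intro i
        simp only [hk, Set.mem_Icc, Fin.val_mk]
        have h1 : ((min ⌊(x i + R)/a⌋₊ (m-1) : ℕ) : ℝ) ≤ (x i + R)/a := by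
          calc ((min ⌊(x i + R)/a⌋₊ (m-1) : ℕ) : ℝ) ≤ (⌊(x i + R)/a⌋₊ : ℝ) := by
                exact_mod_cast Nat.cast_le.mpr (min_le_left _ _)
            _ ≤ (x i + R)/a := Nat.floor_le (div_nonneg (hnn i) ha.le)
        have hfield : a * ((x i + R)/a) = x i + R := by field_simp
        constructor
        · nlinarith [mul_le_mul_of_nonneg_left h1 ha.le]
        · rcases le_total ⌊(x i + R)/a⌋₊ (m-1) with h | h
          · have hmin : min ⌊(x i + R)/a⌋₊ (m-1) = ⌊(x i + R)/a⌋₊ := min_eq_left h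
            have h2 : (x i + R)/a < ⌊(x i + R)/a⌋₊ + 1 := Nat.lt_floor_add_one _
            have h3 : x i + R < ((⌊(x i + R)/a⌋₊ : ℝ) + 1) * a := (div_lt_iff₀ ha).mp h2
            rw [hmin]
            nlinarith
          · have hmin : min ⌊(x i + R)/a⌋₊ (m-1) = m - 1 := min_eq_right h
            have h2 : 2*R/a < (⌊2*R/a⌋₊ : ℝ) + 1 := Nat.lt_floor_add_one _
            have h3 : 2*R < a * m := by
              have h4 : 2*R/a < (m:ℝ) := by
                rw [hm_def]; push_cast; linarith
              calc 2*R = a * (2*R/a) := by field_simp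
                _ < a * m := by exact mul_lt_mul_of_pos_left h4 ha
            have hmcast : ((m - 1 : ℕ) : ℝ) = (m:ℝ) - 1 := by
              rw [Nat.cast_sub hm0]; simp
            rw [hmin, hmcast]
            have h5 := (abs_le.mp (hcoord i)).2
            nlinarith
      refine Set.mem_iUnion.mpr ⟨e k, ?_⟩
      simpa using hxV


variable (F : Set (EuclideanSpace ℝ (Fin p)))

lemma exists_radius (hb : Bornology.IsBounded F) :
    ∃ R : ℝ, 0 ≤ R ∧ F ⊆ Metric.closedBall 0 R := by
  obtain ⟨r, hr⟩ := hb.subset_closedBall 0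
  exact ⟨max r 0, le_max_right _ _,
    hr.trans (Metric.closedBall_subset_closedBall (le_max_left _ _))⟩

lemma covSet_nonempty (hb : Bornology.IsBounded F) {δ : ℝ} (hδ : 0 < δ) :
    {m : ℕ | ∃ U : Fin m → Set (EuclideanSpace ℝ (Fin p)),
      (∀ i, EMetric.diam (U i) ≤ ENNReal.ofReal δ) ∧ F ⊆ ⋃ i, U i}.Nonempty := by
  obtain ⟨R, hR, hFR⟩ := exists_radius F hb
  obtain ⟨m, _, U, hU, hcov⟩ := grid_cover (p := p) hR hδ
  exact ⟨m^p, U, hU, hFR.trans hcov⟩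

lemma Ncov_poly (hb : Bornology.IsBounded F) :
    ∃ C : ℝ, 2 ≤ C ∧ ∀ δ : ℝ, 0 < δ → δ ≤ 1 → (Ncov F δ : ℝ) ≤ (C/δ)^p := by
  obtain ⟨R, hR, hFR⟩ := exists_radius F hb
  refine ⟨2*R*((p:ℝ)+1) + 2, by nlinarith [Nat.cast_nonneg (α := ℝ) p], fun δ hδ hδ1 => ?_⟩
  obtain ⟨m, hm, U, hU, hcov⟩ := grid_cover (p := p) hR hδ
  have h1 : Ncov F δ ≤ m^p := Nat.sInf_le ⟨U, hU, hFR.trans hcov⟩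
  have h2 : (m:ℝ) ≤ (2*R*((p:ℝ)+1) + 2)/δ := by
    have e1 : (2*R*((p:ℝ)+1))/δ + 2/δ = (2*R*((p:ℝ)+1)+2)/δ := by ring
    have e2 : (2:ℝ) ≤ 2/δ := by
      rw [le_div_iff₀ hδ]; linarith
    linarith
  have hm0 : (0:ℝ) ≤ (m:ℝ) := Nat.cast_nonneg _
  calc (Ncov F δ : ℝ) ≤ ((m^p : ℕ) : ℝ) := by exact_mod_cast h1
    _ = (m:ℝ)^p := by push_cast; ring
    _ ≤ ((2*R*((p:ℝ)+1) + 2)/δ)^p := pow_le_pow_left₀ hm0 h2 p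

lemma ratio_boundedUnder (hb : Bornology.IsBounded F) :
    Filter.IsBoundedUnder (· ≤ ·) (nhdsWithin 0 (Set.Ioi 0))
      (fun δ : ℝ => Real.log (Ncov F δ) / Real.log (1/δ)) := by
  obtain ⟨C, hC2, hC⟩ := Ncov_poly F hb
  have hC0 : (0:ℝ) ≤ Real.log C := Real.log_nonneg (by linarith)
  refine ⟨(p:ℝ) * Real.log C + (p:ℝ), ?_⟩
  rw [Filter.eventually_map]
  have hexp1 : Real.exp (-1) < 1 := Real.exp_lt_one_iff.mpr (by norm_num)
  filter_upwards [Ioo_mem_nhdsGT (show (0:ℝ) < Real.exp (-1) from Real.exp_pos _)]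
    with δ hδ
  obtain ⟨hδ0, hδe⟩ := hδ
  have hδ1 : δ < 1 := lt_trans hδe hexp1
  have hlog : 1 ≤ Real.log (1/δ) := by
    rw [one_div, Real.log_inv]
    have : Real.log δ < Real.log (Real.exp (-1)) := Real.log_lt_log hδ0 hδe
    rw [Real.log_exp] at this
    linarith
  rcases Nat.eq_zero_or_pos (Ncov F δ) with h | h
  · rw [h]; push_cast; rw [Real.log_zero, zero_div]; positivity
  · have hN1 : (1:ℝ) ≤ (Ncov F δ : ℝ) := by exact_mod_cast h
    have hCδ : (1:ℝ) ≤ C/δ := by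
      rw [le_div_iff₀ hδ0]; linarith
    have hlogN : Real.log (Ncov F δ) ≤ (p:ℝ) * (Real.log C + Real.log (1/δ)) := by
      calc Real.log (Ncov F δ) ≤ Real.log ((C/δ)^p) :=
            Real.log_le_log (by linarith) (hC δ hδ0 hδ1.le)
        _ = (p:ℝ) * Real.log (C/δ) := by rw [Real.log_pow]
        _ = (p:ℝ) * (Real.log C + Real.log (1/δ)) := by
            rw [Real.log_div (by linarith) hδ0.ne', one_div, Real.log_inv]; ring
    have hlogNnn : 0 ≤ Real.log (1/δ) := by linarith
    calc Real.log (Ncov F δ) / Real.log (1/δ)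
        ≤ ((p:ℝ) * (Real.log C + Real.log (1/δ))) / Real.log (1/δ) := by
          gcongr
      _ = (p:ℝ) * Real.log C / Real.log (1/δ) + (p:ℝ) := by
          field_simp
      _ ≤ (p:ℝ) * Real.log C + (p:ℝ) := by
          have : (p:ℝ) * Real.log C / Real.log (1/δ) ≤ (p:ℝ) * Real.log C := by
            apply div_le_self (by positivity) hlog
          linarith

lemma eventually_Ncov_le (hb : Bornology.IsBounded F) {s : ℝ} (hs : upperBoxDim F < s) :
    ∀ᶠ δ in nhdsWithin (0:ℝ) (Set.Ioi 0), 0 < δ ∧ δ < 1 ∧ (Ncov F δ : ℝ) ≤ (1/δ)^s := by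
  have hev := Filter.eventually_lt_of_limsup_lt hs (ratio_boundedUnder F hb)
  filter_upwards [hev, Ioo_mem_nhdsGT (show (0:ℝ) < 1 by norm_num)] with δ h1 h2
  obtain ⟨hδ0, hδ1⟩ := h2
  refine ⟨hδ0, hδ1, ?_⟩
  have hone : (1:ℝ) < 1/δ := by rw [lt_div_iff₀ hδ0]; linarith
  have hlogpos : 0 < Real.log (1/δ) := Real.log_pos hone
  rcases Nat.eq_zero_or_pos (Ncov F δ) with h | h
  · rw [h]; push_cast; exact Real.rpow_nonneg (by positivity) _
  · have hN1 : (0:ℝ) < (Ncov F δ : ℝ) := by exact_mod_cast h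
    rw [← not_lt]
    intro hcon
    have hlt := Real.log_lt_log (Real.rpow_pos_of_pos (by positivity) s) hcon
    rw [Real.log_rpow (by positivity)] at hlt
    rw [div_lt_iff₀ hlogpos] at h1
    linarith

open scoped ENNReal

def cntJ {N : ℕ} (a b : Fin N → ℝ) (r : ℝ) : ℝ≥0∞ :=
  ∑ i, (Set.Icc (a i) (b i)).indicator (fun _ => (1:ℝ≥0∞)) r

lemma measurable_cntJ {N : ℕ} (a b : Fin N → ℝ) : Measurable (cntJ a b) := by
  apply Finset.measurable_sum
  intro i _
  exact measurable_const.indicator measurableSet_Icc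

lemma lintegral_cntJ {N : ℕ} (a b : Fin N → ℝ) :
    ∫⁻ r, cntJ a b r = ∑ i, ENNReal.ofReal (b i - a i) := by
  simp only [cntJ]
  rw [lintegral_finset_sum _ (fun i _ => measurable_const.indicator measurableSet_Icc)]
  refine Finset.sum_congr rfl fun i _ => ?_
  rw [lintegral_indicator_const measurableSet_Icc, one_mul, Real.volume_Icc]

def Oset (q : ℝ) (n : ℕ) : Set (BoundedContinuousFunction ↥F ℝ) :=
  {f | ∃ δ η : ℝ, 0 < δ ∧ δ < 1/(n+1) ∧ 0 < η ∧
    ∃ N : ℕ, ∃ U : Fin N → Set (EuclideanSpace ℝ (Fin p)), ∃ a b : Fin N → ℝ,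
      (∀ i, EMetric.diam (U i) ≤ ENNReal.ofReal δ) ∧ (F ⊆ ⋃ i, U i) ∧
      (∀ i (x : ↥F), (x : EuclideanSpace ℝ (Fin p)) ∈ U i →
        Set.Icc (f x - η) (f x + η) ⊆ Set.Icc (a i) (b i)) ∧
      volume {r : ℝ | 1 < ENNReal.ofReal (δ ^ q) * cntJ a b r} < ENNReal.ofReal ((1/2) ^ n)}

lemma isOpen_Oset (q : ℝ) (n : ℕ) : IsOpen (Oset F q n) := by
  rw [Metric.isOpen_iff]
  rintro f ⟨δ, η, hδ0, hδn, hη0, N, U, a, b, hdiam, hcov, hincl, hvol⟩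
  refine ⟨η/2, by positivity, ?_⟩
  intro g hg
  rw [Metric.mem_ball] at hg
  refine ⟨δ, η/2, hδ0, hδn, by positivity, N, U, a, b, hdiam, hcov, ?_, hvol⟩
  intro i x hx
  refine Set.Subset.trans ?_ (hincl i x hx)
  have hd := BoundedContinuousFunction.dist_coe_le_dist (f := g) (g := f) x
  rw [Real.dist_eq] at hd
  have habs := abs_le.mp (hd.trans hg.le)
  apply Set.Icc_subset_Icc <;> linarith [habs.1, habs.2]

lemma mem_Oset_of_lipschitz (hb : Bornology.IsBounded F) {q : ℝ} (hq0 : 0 < q)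
    (hq : upperBoxDim F < q + 1) (n : ℕ) (f : BoundedContinuousFunction ↥F ℝ) {L : ℝ}
    (hL : 0 ≤ L)
    (hf : ∀ x y : ↥F, |f x - f y| ≤
      L * dist (x : EuclideanSpace ℝ (Fin p)) (y : EuclideanSpace ℝ (Fin p))) :
    f ∈ Oset F q n := by
  classical
  set Δ := upperBoxDim F with hΔdef
  set γ := (q + 1 - Δ)/2 with hγdef
  have hγ0 : 0 < γ := by rw [hγdef]; linarith
  have hΔγ : Δ < Δ + γ := by linarith
  have hev1 := eventually_Ncov_le F hb hΔγ
  have hhalf : (0:ℝ) < (1/2:ℝ)^n / (L+5) := by positivity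
  have hsmall : (0:ℝ) < min (1/((n:ℝ)+1)) (((1/2:ℝ)^n/(L+5))^(γ⁻¹)) := by
    apply lt_min
    · positivity
    · exact Real.rpow_pos_of_pos hhalf _
  have hev2 : ∀ᶠ δ in nhdsWithin (0:ℝ) (Set.Ioi 0),
      δ ∈ Set.Ioo 0 (min (1/((n:ℝ)+1)) (((1/2:ℝ)^n/(L+5))^(γ⁻¹))) :=
    Ioo_mem_nhdsGT hsmall
  obtain ⟨δ, h1, h2⟩ := (hev1.and hev2).exists
  obtain ⟨hδ0, hδ1, hNbound⟩ := h1
  obtain ⟨-, hδlt⟩ := h2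
  have hδn : δ < 1/((n:ℝ)+1) := lt_of_lt_of_le hδlt (min_le_left _ _)
  have hδγ : δ ^ γ < (1/2:ℝ)^n/(L+5) := by
    have h3 : δ < ((1/2:ℝ)^n/(L+5))^(γ⁻¹) := lt_of_lt_of_le hδlt (min_le_right _ _)
    have h4 := Real.rpow_lt_rpow hδ0.le h3 hγ0
    rwa [← Real.rpow_mul hhalf.le, inv_mul_cancel₀ hγ0.ne', Real.rpow_one] at h4
  -- get an optimal cover
  obtain ⟨U, hdiam, hcov⟩ := Nat.sInf_mem (covSet_nonempty F hb hδ0)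
  set N := Ncov F δ with hNdef
  -- intervals
  set S : Fin N → Set ℝ :=
    fun i => (fun x : ↥F => f x) '' {x : ↥F | (x : EuclideanSpace ℝ (Fin p)) ∈ U i} with hSdef
  have hSbddA : ∀ i, BddAbove (S i) := by
    intro i
    refine ⟨‖f‖, ?_⟩
    rintro y ⟨x, -, rfl⟩
    have := f.norm_coe_le_norm x
    rw [Real.norm_eq_abs] at this
    exact (abs_le.mp this).2
  have hSbddB : ∀ i, BddBelow (S i) := by
    intro i
    refine ⟨-‖f‖, ?_⟩
    rintro y ⟨x, -, rfl⟩
    have := f.norm_coe_le_norm x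
    rw [Real.norm_eq_abs] at this
    exact (abs_le.mp this).1
  set A : Fin N → ℝ := fun i => if (S i).Nonempty then sInf (S i) - 2*δ else 1 with hAdef
  set B : Fin N → ℝ := fun i => if (S i).Nonempty then sSup (S i) + 2*δ else 0 with hBdef
  refine ⟨δ, δ, hδ0, hδn, hδ0, N, U, A, B, hdiam, hcov, ?_, ?_⟩
  · -- margin condition
    intro i x hx
    have hne : (S i).Nonempty := ⟨f x, ⟨x, hx, rfl⟩⟩
    have hAi : A i = sInf (S i) - 2*δ := by simp only [hAdef]; rw [if_pos hne]
    have hBi : B i = sSup (S i) + 2*δ := by simp only [hBdef]; rw [if_pos hne]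
    have h1 : sInf (S i) ≤ f x := csInf_le (hSbddB i) ⟨x, hx, rfl⟩
    have h2 : f x ≤ sSup (S i) := le_csSup (hSbddA i) ⟨x, hx, rfl⟩
    rw [hAi, hBi]
    apply Set.Icc_subset_Icc <;> linarith
  · -- measure bound
    have hgap : ∀ i, B i - A i ≤ (L+4)*δ := by
      intro i
      by_cases hne : (S i).Nonempty
      · have hAi : A i = sInf (S i) - 2*δ := by simp only [hAdef]; rw [if_pos hne]
        have hBi : B i = sSup (S i) + 2*δ := by simp only [hBdef]; rw [if_pos hne]
        have hd : ∀ u ∈ S i, ∀ v ∈ S i, u - v ≤ L*δ := by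
          rintro u ⟨x, hx, rfl⟩ v ⟨y, hy, rfl⟩
          have hdist : dist (x : EuclideanSpace ℝ (Fin p)) (y : EuclideanSpace ℝ (Fin p)) ≤ δ := by
            have h5 := (EMetric.edist_le_diam_of_mem
              (show (x : EuclideanSpace ℝ (Fin p)) ∈ U i from hx)
              (show (y : EuclideanSpace ℝ (Fin p)) ∈ U i from hy)).trans (hdiam i)
            exact (edist_le_ofReal hδ0.le).mp h5
          have h6 := (abs_le.mp (hf x y)).2
          have h7 : L * dist (x : EuclideanSpace ℝ (Fin p)) (y : EuclideanSpace ℝ (Fin p)) ≤ L*δ :=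
            mul_le_mul_of_nonneg_left hdist hL
          linarith
        have hsup : sSup (S i) ≤ sInf (S i) + L*δ := by
          apply csSup_le hne
          intro u hu
          have h8 : u - L*δ ≤ sInf (S i) := by
            apply le_csInf hne
            intro v hv
            linarith [hd u hu v hv]
          linarith
        rw [hAi, hBi]
        linarith
      · have hAi : A i = 1 := by simp only [hAdef]; rw [if_neg hne]
        have hBi : B i = 0 := by simp only [hBdef]; rw [if_neg hne]
        rw [hAi, hBi]
        have : 0 ≤ (L+4)*δ := mul_nonneg (by linarith) hδ0.le
        linarith
    set k : ℝ≥0∞ := ENNReal.ofReal (δ ^ q) with hkdef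
    have hkpos : (0:ℝ) < δ ^ q := Real.rpow_pos_of_pos hδ0 q
    have hk0 : k ≠ 0 := by
      rw [hkdef, Ne, ENNReal.ofReal_eq_zero, not_le]; exact hkpos
    have hktop : k ≠ ⊤ := ENNReal.ofReal_ne_top
    have hsubset : {r : ℝ | 1 < k * cntJ A B r} ⊆ {r : ℝ | k⁻¹ ≤ cntJ A B r} := by
      intro r hr
      rw [Set.mem_setOf_eq] at hr ⊢
      rw [ENNReal.inv_le_iff_le_mul (fun _ => hk0) (fun h => absurd h hktop)]
      exact hr.le
    have hmarkov := meas_ge_le_lintegral_div (μ := volume) (measurable_cntJ A B).aemeasurable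
        (ENNReal.inv_ne_zero.mpr hktop) (ENNReal.inv_ne_top.mpr hk0)
    have hlin : (∫⁻ r, cntJ A B r) ≤ ↑N * ENNReal.ofReal ((L+4)*δ) := by
      rw [lintegral_cntJ]
      calc ∑ i, ENNReal.ofReal (B i - A i) ≤ ∑ _i : Fin N, ENNReal.ofReal ((L+4)*δ) :=
            Finset.sum_le_sum (fun i _ => ENNReal.ofReal_le_ofReal (hgap i))
        _ = ↑N * ENNReal.ofReal ((L+4)*δ) := by
            simp [Finset.sum_const, Finset.card_univ, nsmul_eq_mul]
    have hreal : (N:ℝ) * ((L+4)*δ) * δ^q < (1/2:ℝ)^n := by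
      have hpow_pos : 0 < δ^(Δ+γ) := Real.rpow_pos_of_pos hδ0 _
      have e2 : δ^γ = δ^((1:ℝ)+q) / δ^(Δ+γ) := by
        rw [← Real.rpow_sub hδ0]
        congr 1
        rw [hγdef]; ring
      have e3 : (1/δ)^(Δ+γ) = 1/δ^(Δ+γ) := by
        rw [one_div, Real.inv_rpow hδ0.le, one_div]
      have e5 : δ^((1:ℝ)+q) = δ * δ^q := by rw [Real.rpow_add hδ0, Real.rpow_one]
      have hmono : (N:ℝ) * ((L+4)*δ) * δ^q ≤ (1/δ)^(Δ+γ) * ((L+4)*δ) * δ^q := by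
        apply mul_le_mul_of_nonneg_right _ (Real.rpow_nonneg hδ0.le q)
        exact mul_le_mul_of_nonneg_right hNbound (mul_nonneg (by linarith) hδ0.le)
      have heq : (1/δ)^(Δ+γ) * ((L+4)*δ) * δ^q = (L+4) * δ^γ := by
        rw [e3, e2, e5]
        field_simp
      have h9 : (L+4) * δ^γ ≤ (L+4) * ((1/2:ℝ)^n/(L+5)) :=
        mul_le_mul_of_nonneg_left hδγ.le (by linarith)
      have h10 : (L+4) * ((1/2:ℝ)^n/(L+5)) < (1/2:ℝ)^n := by
        have hX : (0:ℝ) < (1/2:ℝ)^n := by positivity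
        have h7 : (L+4)/(L+5) < 1 := (div_lt_one (by linarith)).mpr (by linarith)
        have : (L+4) * ((1/2:ℝ)^n/(L+5)) = (1/2:ℝ)^n * ((L+4)/(L+5)) := by ring
        rw [this]
        nlinarith
      calc (N:ℝ) * ((L+4)*δ) * δ^q ≤ (1/δ)^(Δ+γ) * ((L+4)*δ) * δ^q := hmono
        _ = (L+4) * δ^γ := heq
        _ ≤ (L+4) * ((1/2:ℝ)^n/(L+5)) := h9
        _ < (1/2:ℝ)^n := h10
    have hennreal : (↑N * ENNReal.ofReal ((L+4)*δ)) * k = ENNReal.ofReal ((N:ℝ) * ((L+4)*δ) * δ^q) := by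
      rw [hkdef, ← ENNReal.ofReal_natCast N,
        ← ENNReal.ofReal_mul (Nat.cast_nonneg N),
        ← ENNReal.ofReal_mul (mul_nonneg (Nat.cast_nonneg N) (mul_nonneg (by linarith) hδ0.le))]
    calc volume {r : ℝ | 1 < k * cntJ A B r}
        ≤ volume {r : ℝ | k⁻¹ ≤ cntJ A B r} := measure_mono hsubset
      _ ≤ (∫⁻ r, cntJ A B r) / k⁻¹ := hmarkov
      _ = (∫⁻ r, cntJ A B r) * k := by rw [div_eq_mul_inv, inv_inv]
      _ ≤ (↑N * ENNReal.ofReal ((L+4)*δ)) * k := by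
          exact mul_le_mul_left hlin k
      _ = ENNReal.ofReal ((N:ℝ) * ((L+4)*δ) * δ^q) := hennreal
      _ < ENNReal.ofReal ((1/2)^n) := by
          rw [ENNReal.ofReal_lt_ofReal_iff (by positivity)]
          exact hreal

lemma exists_lipschitz_close (hF : F.Nonempty) {α : ℝ} (hα0 : 0 < α) (hα1 : α ≤ 1)
    (f : BoundedContinuousFunction ↥F ℝ) (hf : f ∈ HolderBall α F) {ε : ℝ} (hε : 0 < ε) :
    ∃ g : BoundedContinuousFunction ↥F ℝ, g ∈ HolderBall α F ∧ dist g f ≤ ε ∧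
      ∃ L : ℝ, 0 ≤ L ∧ ∀ x y : ↥F, |g x - g y| ≤
        L * dist (x : EuclideanSpace ℝ (Fin p)) (y : EuclideanSpace ℝ (Fin p)) := by
  haveI : Nonempty ↥F := hF.to_subtype
  set L : ℝ := (ε/2)^(α⁻¹*(α-1)) with hLdef
  have hL0 : 0 < L := Real.rpow_pos_of_pos (by positivity) _
  have hkey : ∀ t : ℝ, 0 ≤ t → t^α ≤ L*t + ε/2 := by
    intro t ht
    set t₁ : ℝ := (ε/2)^(α⁻¹) with ht₁def
    have ht₁0 : 0 < t₁ := Real.rpow_pos_of_pos (by positivity) _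
    rcases le_total t t₁ with h | h
    · have h1 : t^α ≤ t₁^α := Real.rpow_le_rpow ht h hα0.le
      have h2 : t₁^α = ε/2 := by
        rw [ht₁def, ← Real.rpow_mul (by positivity), inv_mul_cancel₀ hα0.ne', Real.rpow_one]
      nlinarith [mul_nonneg hL0.le ht]
    · have ht0 : 0 < t := lt_of_lt_of_le ht₁0 h
      have h1 : t ^ α = t^(α-1) * t := by
        have h1' := Real.rpow_add ht0 (α-1) 1
        rw [Real.rpow_one] at h1'
        rw [show α - 1 + 1 = α by ring] at h1'
        exact h1'
      have h2 : t^(α-1) ≤ t₁^(α-1) := Real.rpow_le_rpow_of_nonpos ht₁0 h (by linarith)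
      have h3 : t₁^(α-1) = L := by
        rw [ht₁def, hLdef, Real.rpow_mul (by positivity)]
      have h4 : t^(α-1) * t ≤ L * t := mul_le_mul_of_nonneg_right (h3 ▸ h2) ht
      linarith [h1, h4]
  set ω : ℝ → ℝ := fun t => min (t^α) (L*t) with hωdef
  have hω0 : ω 0 = 0 := by
    simp [hωdef, Real.zero_rpow hα0.ne']
  have hωnn : ∀ t : ℝ, 0 ≤ t → 0 ≤ ω t := by
    intro t ht
    exact le_min (Real.rpow_nonneg ht _) (mul_nonneg hL0.le ht)
  have hωmono : ∀ s t : ℝ, 0 ≤ s → s ≤ t → ω s ≤ ω t := by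
    intro s t hs hst
    exact min_le_min (Real.rpow_le_rpow hs hst hα0.le) (mul_le_mul_of_nonneg_left hst hL0.le)
  have hlin : ConcaveOn ℝ (Set.Ici 0) (fun t : ℝ => L*t) :=
    ⟨convex_Ici 0, fun x _ y _ a b _ _ _ => by
      simp only [smul_eq_mul]; exact le_of_eq (by ring)⟩
  have hωconc : ConcaveOn ℝ (Set.Ici 0) ω := by
    have h := (Real.concaveOn_rpow hα0.le hα1).inf hlin
    exact h
  have hωsub : ∀ s t : ℝ, 0 ≤ s → 0 ≤ t → ω (s+t) ≤ ω s + ω t := by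
    intro s t hs ht
    rcases eq_or_lt_of_le (add_nonneg hs ht) with h0 | h0
    · have hs0 : s = 0 := by linarith
      have ht0 : t = 0 := by linarith
      simp [hs0, ht0, hω0]
    · have hne : s + t ≠ 0 := h0.ne'
      have hmem0 : (0:ℝ) ∈ Set.Ici (0:ℝ) := Set.self_mem_Ici
      have hmemst : s + t ∈ Set.Ici (0:ℝ) := le_of_lt h0
      have hab1 : t/(s+t) + s/(s+t) = 1 := by field_simp; ring
      have hcs := hωconc.2 hmem0 hmemst (div_nonneg ht h0.le) (div_nonneg hs h0.le) hab1
      simp only [smul_eq_mul] at hcs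
      rw [show t/(s+t) * 0 + s/(s+t) * (s+t) = s by field_simp; ring, hω0, mul_zero, zero_add] at hcs
      have hab2 : s/(s+t) + t/(s+t) = 1 := by field_simp
      have hct := hωconc.2 hmem0 hmemst (div_nonneg hs h0.le) (div_nonneg ht h0.le) hab2
      simp only [smul_eq_mul] at hct
      rw [show s/(s+t) * 0 + t/(s+t) * (s+t) = t by field_simp; ring, hω0, mul_zero, zero_add] at hct
      have hsplit : ω (s+t) = (s/(s+t)) * ω (s+t) + (t/(s+t)) * ω (s+t) := by
        have h11 : (s/(s+t)) + (t/(s+t)) = 1 := by field_simp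
        calc ω (s+t) = ((s/(s+t)) + (t/(s+t))) * ω (s+t) := by rw [h11, one_mul]
          _ = (s/(s+t)) * ω (s+t) + (t/(s+t)) * ω (s+t) := by ring
      linarith
  -- the inf-convolution
  set g₀ : ↥F → ℝ := fun x => ⨅ y : ↥F,
    (f y + ω (dist (x : EuclideanSpace ℝ (Fin p)) (y : EuclideanSpace ℝ (Fin p)))) with hg₀def
  have hbdd : ∀ x : ↥F, BddBelow (Set.range fun y : ↥F =>
      f y + ω (dist (x : EuclideanSpace ℝ (Fin p)) (y : EuclideanSpace ℝ (Fin p)))) := by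
    intro x
    refine ⟨-‖f‖, ?_⟩
    rintro v ⟨y, rfl⟩
    show -‖f‖ ≤ f y + ω (dist (x : EuclideanSpace ℝ (Fin p)) (y : EuclideanSpace ℝ (Fin p)))
    have h1 := f.norm_coe_le_norm y
    rw [Real.norm_eq_abs] at h1
    have h2 := hωnn _ (dist_nonneg (x := (x : EuclideanSpace ℝ (Fin p)))
      (y := (y : EuclideanSpace ℝ (Fin p))))
    linarith [(abs_le.mp h1).1]
  have hg_le : ∀ x, g₀ x ≤ f x := by
    intro x
    have h := ciInf_le (hbdd x) x
    simpa [dist_self, hω0] using h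
  have hg_ge : ∀ x, f x - ε/2 ≤ g₀ x := by
    intro x
    apply le_ciInf
    intro y
    have h2 := (abs_le.mp (hf x y)).2
    have h3 : dist (x : EuclideanSpace ℝ (Fin p)) (y : EuclideanSpace ℝ (Fin p)) ^ α ≤
        ω (dist (x : EuclideanSpace ℝ (Fin p)) (y : EuclideanSpace ℝ (Fin p))) + ε/2 := by
      simp only [hωdef]
      rw [← min_add_add_right]
      exact le_min (by linarith) (by linarith [hkey _ (dist_nonneg (x := (x : EuclideanSpace ℝ (Fin p))) (y := (y : EuclideanSpace ℝ (Fin p))))])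
    linarith
  have hmod : ∀ x x' : ↥F, g₀ x ≤ g₀ x' +
      ω (dist (x : EuclideanSpace ℝ (Fin p)) (x' : EuclideanSpace ℝ (Fin p))) := by
    intro x x'
    rw [← sub_le_iff_le_add]
    apply le_ciInf
    intro y
    rw [sub_le_iff_le_add]
    have htri : dist (x : EuclideanSpace ℝ (Fin p)) (y : EuclideanSpace ℝ (Fin p)) ≤
        dist (x : EuclideanSpace ℝ (Fin p)) (x' : EuclideanSpace ℝ (Fin p)) +
        dist (x' : EuclideanSpace ℝ (Fin p)) (y : EuclideanSpace ℝ (Fin p)) := dist_triangle _ _ _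
    have h5 := hωmono _ _ (dist_nonneg) htri
    have h6 := hωsub (dist (x : EuclideanSpace ℝ (Fin p)) (x' : EuclideanSpace ℝ (Fin p)))
      (dist (x' : EuclideanSpace ℝ (Fin p)) (y : EuclideanSpace ℝ (Fin p))) dist_nonneg dist_nonneg
    have h7 : g₀ x ≤ f y + ω (dist (x : EuclideanSpace ℝ (Fin p)) (y : EuclideanSpace ℝ (Fin p))) :=
      ciInf_le (hbdd x) y
    have h8 : ω (dist (x : EuclideanSpace ℝ (Fin p)) (x' : EuclideanSpace ℝ (Fin p)) +
        dist (x' : EuclideanSpace ℝ (Fin p)) (y : EuclideanSpace ℝ (Fin p))) ≤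
        ω (dist (x : EuclideanSpace ℝ (Fin p)) (x' : EuclideanSpace ℝ (Fin p))) +
        ω (dist (x' : EuclideanSpace ℝ (Fin p)) (y : EuclideanSpace ℝ (Fin p))) := h6
    linarith
  have habs : ∀ x x' : ↥F, |g₀ x - g₀ x'| ≤
      ω (dist (x : EuclideanSpace ℝ (Fin p)) (x' : EuclideanSpace ℝ (Fin p))) := by
    intro x x'
    rw [abs_sub_le_iff]
    constructor
    · linarith [hmod x x']
    · have h := hmod x' x
      rw [dist_comm (x' : EuclideanSpace ℝ (Fin p)) (x : EuclideanSpace ℝ (Fin p))] at h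
      linarith
  have hωL : ∀ t : ℝ, ω t ≤ L * t := fun t => min_le_right _ _
  have hωα : ∀ t : ℝ, ω t ≤ t ^ α := fun t => min_le_left _ _
  have hcont : Continuous g₀ := by
    refine (LipschitzWith.of_dist_le_mul (K := L.toNNReal) ?_).continuous
    intro x y
    rw [Real.dist_eq, Real.coe_toNNReal _ hL0.le]
    calc |g₀ x - g₀ y| ≤ ω (dist (x : EuclideanSpace ℝ (Fin p)) (y : EuclideanSpace ℝ (Fin p))) :=
          habs x y
      _ ≤ L * dist (x : EuclideanSpace ℝ (Fin p)) (y : EuclideanSpace ℝ (Fin p)) := hωL _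
      _ = L * dist x y := by rw [Subtype.dist_eq]
  have hgbd : ∀ x y : ↥F, dist (g₀ x) (g₀ y) ≤ 2*‖f‖ + ε := by
    intro x y
    have hfx := f.norm_coe_le_norm x
    have hfy := f.norm_coe_le_norm y
    rw [Real.norm_eq_abs] at hfx hfy
    have h1 := hg_le x
    have h2 := hg_ge x
    have h3 := hg_le y
    have h4 := hg_ge y
    rw [Real.dist_eq, abs_sub_le_iff]
    obtain ⟨hfx1, hfx2⟩ := abs_le.mp hfx
    obtain ⟨hfy1, hfy2⟩ := abs_le.mp hfy
    constructor <;> linarith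
  set gc : C(↥F, ℝ) := ⟨g₀, hcont⟩ with hgcdef
  set g : BoundedContinuousFunction ↥F ℝ :=
    BoundedContinuousFunction.mkOfBound gc (2*‖f‖+ε) hgbd with hgdef
  have hgcoe : ∀ x : ↥F, g x = g₀ x := fun x => rfl
  refine ⟨g, ?_, ?_, L, hL0.le, ?_⟩
  · intro x y
    rw [hgcoe, hgcoe]
    exact (habs x y).trans (hωα _)
  · rw [BoundedContinuousFunction.dist_le hε.le]
    intro x
    rw [hgcoe, Real.dist_eq]
    have h1 := hg_le x
    have h2 := hg_ge x
    rw [abs_le]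
    constructor <;> linarith
  · intro x y
    rw [hgcoe, hgcoe]
    exact (habs x y).trans (hωL _)

lemma volume_levelset_zero {q : ℝ} (hq0 : 0 < q) (f : BoundedContinuousFunction ↥F ℝ)
    (hf : ∀ n : ℕ, f ∈ Oset F q n) {d : ℝ} (hd : q < d) :
    volume {r : ℝ | ENNReal.ofReal d ≤ dimH (Subtype.val '' ((⇑f) ⁻¹' {r}))} = 0 := by
  classical
  choose δ η hδ0 hδn hη0 N U a b hdiam hcov hincl hvol using hf
  set Bad : ℕ → Set ℝ := fun n => {r : ℝ | 1 < ENNReal.ofReal (δ n ^ q) * cntJ (a n) (b n) r}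
    with hBad
  have htsum : (∑' n, volume (Bad n)) ≠ ⊤ := by
    have h2 : (∑' n, volume (Bad n)) ≤ ∑' n : ℕ, ENNReal.ofReal ((1/2:ℝ)^n) :=
      ENNReal.tsum_le_tsum (fun n => (hvol n).le)
    have h3 : ∑' n : ℕ, ENNReal.ofReal ((1/2:ℝ)^n) = ∑' n : ℕ, (ENNReal.ofReal (1/2:ℝ))^n := by
      congr 1; funext n; rw [ENNReal.ofReal_pow (by norm_num)]
    have h4 : ∑' n : ℕ, (ENNReal.ofReal (1/2:ℝ))^n = (1 - ENNReal.ofReal (1/2:ℝ))⁻¹ :=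
      ENNReal.tsum_geometric _
    have h5 : ENNReal.ofReal (1/2:ℝ) < 1 := by
      rw [ENNReal.ofReal_lt_one]; norm_num
    have h6 : (1 - ENNReal.ofReal (1/2:ℝ)) ≠ 0 := by
      intro hcontra
      rw [tsub_eq_zero_iff_le] at hcontra
      exact absurd hcontra (not_le.mpr h5)
    have h7 : (1 - ENNReal.ofReal (1/2:ℝ))⁻¹ ≠ ⊤ := ENNReal.inv_ne_top.mpr h6
    exact ne_top_of_le_ne_top h7 (h2.trans (le_of_eq (h3.trans h4)))
  have hlimsup : volume (Filter.limsup Bad Filter.atTop) = 0 :=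
    measure_limsup_atTop_eq_zero htsum
  apply measure_mono_null ?_ hlimsup
  intro r hr
  rw [Set.mem_setOf_eq] at hr
  by_contra hrn
  rw [Filter.limsup_eq_iInf_iSup_of_nat] at hrn
  simp only [Set.iInf_eq_iInter, Set.iSup_eq_iUnion, Set.mem_iInter, Set.mem_iUnion] at hrn
  push_neg at hrn
  obtain ⟨n₀, hn₀⟩ := hrn
  set fib := (Subtype.val '' ((⇑f) ⁻¹' {r} : Set ↥F)) with hfib
  have hμH : μH[q] fib ≤ 1 := by
    have hcover : ∀ n : ℕ,
        fib ⊆ ⋃ i : {i : Fin (N n) // r ∈ Set.Icc (a n i) (b n i)}, U n i.1 := by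
      intro n x hx
      obtain ⟨x', hx', rfl⟩ := hx
      have hxF : (x' : EuclideanSpace ℝ (Fin p)) ∈ F := x'.2
      obtain ⟨i, hi⟩ := Set.mem_iUnion.mp (hcov n hxF)
      have hfr : f x' = r := hx'
      have hrmem : r ∈ Set.Icc (a n i) (b n i) := by
        apply hincl n i x' hi
        rw [hfr]
        exact Set.mem_Icc.mpr ⟨by linarith [hη0 n], by linarith [hη0 n]⟩
      exact Set.mem_iUnion.mpr ⟨⟨i, hrmem⟩, hi⟩
    have htend : Filter.Tendsto (fun n => ENNReal.ofReal (δ n)) Filter.atTop (nhds 0) := by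
      rw [show (0:ℝ≥0∞) = ENNReal.ofReal 0 by simp]
      apply ENNReal.tendsto_ofReal
      apply squeeze_zero (fun n => (hδ0 n).le) (fun n => (hδn n).le)
      exact tendsto_one_div_add_atTop_nhds_zero_nat
    have hle := MeasureTheory.Measure.hausdorffMeasure_le_liminf_sum q fib (fun n => ENNReal.ofReal (δ n)) htend
      (fun n (i : {i : Fin (N n) // r ∈ Set.Icc (a n i) (b n i)}) => U n i.1)
      (Filter.Eventually.of_forall (fun n i => hdiam n i.1))
      (Filter.Eventually.of_forall hcover)
    refine hle.trans ?_
    apply Filter.liminf_le_of_frequently_le'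
    apply Filter.Eventually.frequently
    rw [Filter.eventually_atTop]
    refine ⟨n₀, fun n hn => ?_⟩
    have hbadn := hn₀ n hn
    rw [hBad, Set.mem_setOf_eq, not_lt] at hbadn
    have hcnt : cntJ (a n) (b n) r =
        (Fintype.card {i : Fin (N n) // r ∈ Set.Icc (a n i) (b n i)} : ℝ≥0∞) := by
      simp only [cntJ, Set.indicator_apply, Fintype.card_subtype]
      rw [Finset.sum_boole]
    calc (∑ i : {i : Fin (N n) // r ∈ Set.Icc (a n i) (b n i)},
          EMetric.diam (U n i.1) ^ q)
        ≤ ∑ _i : {i : Fin (N n) // r ∈ Set.Icc (a n i) (b n i)}, (ENNReal.ofReal (δ n)) ^ q := by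
          apply Finset.sum_le_sum
          intro i _
          exact ENNReal.rpow_le_rpow (hdiam n i.1) hq0.le
      _ = (Fintype.card {i : Fin (N n) // r ∈ Set.Icc (a n i) (b n i)} : ℝ≥0∞) *
            (ENNReal.ofReal (δ n)) ^ q := by
          simp [Finset.sum_const, Finset.card_univ, nsmul_eq_mul]
      _ = ENNReal.ofReal (δ n ^ q) * cntJ (a n) (b n) r := by
          rw [hcnt, ENNReal.ofReal_rpow_of_pos (hδ0 n)]
          ring
      _ ≤ 1 := hbadn
  have hdim : ((Real.toNNReal q : ℝ≥0) : ℝ≥0∞) < dimH fib := by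
    have h1 : ENNReal.ofReal q < ENNReal.ofReal d := by
      rw [ENNReal.ofReal_lt_ofReal_iff (lt_trans hq0 hd)]
      exact hd
    exact lt_of_lt_of_le h1 hr
  have htop := hausdorffMeasure_of_lt_dimH hdim
  rw [Real.coe_toNNReal q hq0.le] at htop
  rw [htop] at hμH
  exact ENNReal.one_ne_top (top_le_iff.mp hμH)

lemma DstarF_bddAbove (f : ↥F → ℝ) :
    BddAbove {d : ℝ | 0 < volume {r : ℝ | ENNReal.ofReal d ≤ dimH (Subtype.val '' (f ⁻¹' {r}))}} := by
  refine ⟨(p:ℝ), ?_⟩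
  intro d hd
  rw [Set.mem_setOf_eq] at hd
  obtain ⟨r, hr⟩ := nonempty_of_measure_ne_zero hd.ne'
  rw [Set.mem_setOf_eq] at hr
  have h1 : dimH (Subtype.val '' (f ⁻¹' {r})) ≤ ((p:ℕ) : ℝ≥0∞) := by
    calc dimH (Subtype.val '' (f ⁻¹' {r}))
        ≤ dimH (Set.univ : Set (EuclideanSpace ℝ (Fin p))) := dimH_mono (Set.subset_univ _)
      _ = (Module.finrank ℝ (EuclideanSpace ℝ (Fin p)) : ℝ≥0∞) :=
          Real.dimH_univ_eq_finrank (EuclideanSpace ℝ (Fin p))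
      _ = ((p:ℕ) : ℝ≥0∞) := by rw [finrank_euclideanSpace_fin]
  rcases le_total d 0 with h | h
  · exact h.trans (Nat.cast_nonneg p)
  · have h2 : ENNReal.ofReal d ≤ ENNReal.ofReal ((p:ℕ):ℝ) := by
      rw [ENNReal.ofReal_natCast]
      exact hr.trans h1
    rwa [ENNReal.ofReal_le_ofReal_iff (Nat.cast_nonneg p)] at h2

lemma DstarF_mem_zero (f : ↥F → ℝ) :
    (0:ℝ) ∈ {d : ℝ | 0 < volume {r : ℝ | ENNReal.ofReal d ≤ dimH (Subtype.val '' (f ⁻¹' {r}))}} := by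
  simp only [Set.mem_setOf_eq, ENNReal.ofReal_zero]
  have huniv : {r : ℝ | (0:ℝ≥0∞) ≤ dimH (Subtype.val '' (f ⁻¹' {r}))} = Set.univ := by
    ext r; simp
  rw [huniv, Real.volume_univ]
  exact ENNReal.zero_lt_top

lemma DstarF_nonneg (f : ↥F → ℝ) : 0 ≤ DstarF F f :=
  le_csSup (DstarF_bddAbove F f) (DstarF_mem_zero F f)

lemma DstarF_le_of_good {q : ℝ} (hq0 : 0 < q) (f : BoundedContinuousFunction ↥F ℝ)
    (hf : ∀ n : ℕ, f ∈ Oset F q n) : DstarF F ⇑f ≤ q := by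
  apply Real.sSup_le _ hq0.le
  intro d hd
  rw [Set.mem_setOf_eq] at hd
  by_contra hcontra
  push_neg at hcontra
  rw [volume_levelset_zero F hq0 f hf hcontra] at hd
  exact lt_irrefl 0 hd

end Stmt17aux

/-- For any bounded measurable `F ⊆ ℝ^p` and any `0 < α ≤ 1`,
`D_*(α, F) ≤ max (0, \overline{dim}_B F − 1)`. -/
theorem stmt17 {p : ℕ} (F : Set (EuclideanSpace ℝ (Fin p)))
    (hb : Bornology.IsBounded F) (hmes : MeasurableSet F)
    (α : ℝ) (hα0 : 0 < α) (hα1 : α ≤ 1) :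
    DStar α F ≤ max 0 (upperBoxDim F - 1) := by
  classical
  set M := max 0 (upperBoxDim F - 1) with hM
  have hM0 : 0 ≤ M := le_max_left _ _
  rw [DStar]
  apply Real.sSup_le _ hM0
  rintro d ⟨G, hGdense, hGδ, rfl⟩
  have h0mem : (0 : BoundedContinuousFunction ↥F ℝ) ∈ HolderBall α F := by
    intro x y
    simp only [BoundedContinuousFunction.coe_zero, Pi.zero_apply, sub_zero, abs_zero]
    exact Real.rpow_nonneg dist_nonneg α
  haveI hne : Nonempty ↥(HolderBall α F) := ⟨⟨0, h0mem⟩⟩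
  have hclosed : IsClosed (HolderBall α F) := by
    have hrepr : HolderBall α F = ⋂ (x : ↥F) (y : ↥F),
        {f : BoundedContinuousFunction ↥F ℝ |
          |f x - f y| ≤ dist (x : EuclideanSpace ℝ (Fin p)) (y : EuclideanSpace ℝ (Fin p)) ^ α} := by
      ext f
      simp only [HolderBall, Set.mem_setOf_eq, Set.mem_iInter]
    rw [hrepr]
    refine isClosed_iInter fun x => isClosed_iInter fun y => ?_
    apply isClosed_le _ continuous_const
    exact ((continuous_eval_const x).sub
      (continuous_eval_const y)).abs
  haveI : CompleteSpace ↥(HolderBall α F) := hclosed.completeSpace_coe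
  set O' : ℚ × ℕ → Set ↥(HolderBall α F) := fun qn =>
    if M < (qn.1 : ℝ) then Subtype.val ⁻¹' (Stmt17aux.Oset F (qn.1:ℝ) qn.2) else Set.univ
    with hO'
  have hO'open : ∀ qn, IsOpen (O' qn) := by
    intro qn
    simp only [hO']
    split_ifs
    · exact (Stmt17aux.isOpen_Oset F _ _).preimage continuous_subtype_val
    · exact isOpen_univ
  have hO'dense : ∀ qn, Dense (O' qn) := by
    intro qn
    simp only [hO']
    split_ifs with hq
    · have hq0 : (0:ℝ) < (qn.1:ℝ) := lt_of_le_of_lt hM0 hq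
      have hq1 : upperBoxDim F < (qn.1:ℝ) + 1 := by
        have h9 : upperBoxDim F - 1 ≤ M := le_max_right _ _
        linarith
      rw [Metric.dense_iff]
      intro f ε hε
      by_cases hF : F.Nonempty
      · obtain ⟨g, hgH, hgd, L, hL, hgf⟩ :=
          Stmt17aux.exists_lipschitz_close F hF hα0 hα1 f.1 f.2 (half_pos hε)
        refine ⟨⟨g, hgH⟩, ?_, ?_⟩
        · rw [Metric.mem_ball]
          calc dist (⟨g, hgH⟩ : ↥(HolderBall α F)) f = dist g f.1 := rfl
            _ ≤ ε/2 := hgd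
            _ < ε := by linarith
        · exact Stmt17aux.mem_Oset_of_lipschitz F hb hq0 hq1 qn.2 g hL hgf
      · refine ⟨f, Metric.mem_ball_self hε, ?_⟩
        apply Stmt17aux.mem_Oset_of_lipschitz F hb hq0 hq1 qn.2 f.1 (le_refl (0:ℝ))
        intro x y
        exact absurd ⟨(x : EuclideanSpace ℝ (Fin p)), x.2⟩ hF
    · exact dense_univ
  have hGoodGδ : IsGδ (⋂ qn, O' qn) := IsGδ.iInter fun qn => (hO'open qn).isGδ
  have hGoodDense : Dense (⋂ qn, O' qn) := dense_iInter_of_isOpen hO'open hO'dense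
  obtain ⟨f, hfG, hfGood⟩ := (Dense.inter_of_Gδ hGδ hGoodGδ hGdense hGoodDense).nonempty
  have himg : DstarF F ⇑(f : BoundedContinuousFunction ↥F ℝ) ∈
      (fun g : ↥(HolderBall α F) =>
        DstarF F ⇑(g : BoundedContinuousFunction ↥F ℝ)) '' G :=
    ⟨f, hfG, rfl⟩
  have hbddB : BddBelow ((fun g : ↥(HolderBall α F) =>
      DstarF F ⇑(g : BoundedContinuousFunction ↥F ℝ)) '' G) := by
    refine ⟨0, ?_⟩
    rintro y ⟨g, -, rfl⟩
    exact Stmt17aux.DstarF_nonneg F _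
  refine le_trans (csInf_le hbddB himg) ?_
  by_contra hcon
  push_neg at hcon
  obtain ⟨qq, hq1, hq2⟩ := exists_rat_btwn hcon
  have hq0 : (0:ℝ) < (qq:ℝ) := lt_of_le_of_lt hM0 hq1
  have hOall : ∀ n : ℕ, (f : BoundedContinuousFunction ↥F ℝ) ∈ Stmt17aux.Oset F (qq:ℝ) n := by
    intro n
    have hmem := Set.mem_iInter.mp hfGood (qq, n)
    simp only [hO'] at hmem
    rw [if_pos hq1] at hmem
    exact hmem
  have hfinal := Stmt17aux.DstarF_le_of_good F hq0 _ hOall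
  linarith

end
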